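/- Let a, b be real numbers and ξ > 0. Define the complex 3×3 matrices A = −[[0,0,0],[−a,1,0],[−b,0,1]], B = [[1,a,b],[0,0,0],[0,0,0]], and D = diag(1, 1, √ξ). Then A·D⁻¹ + i·B·D is invertible and −(A·D⁻¹ + i·B·D)⁻¹·(A·D⁻¹ − i·B·D) = (1/(1+a²+b²ξ))·[[1−a²−b²ξ, 2a, 2b√ξ],[2a, a²−1−b²ξ, 2ab√ξ],[2b√ξ, 2ab√ξ, b²ξ−1−a²]]. -/

import Mathlib

open scoped Matrix

set_option maxHeartbeats 1600000

/-- For the three-line Fülöp–Tsutsui filter with real parameters `a, b`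
and `D = diag(1,1,√ξ)` (`ξ > 0`), the matrix `A·D⁻¹ + i·B·D` is invertible and the
scattering matrix `−(A·D⁻¹ + i·B·D)⁻¹·(A·D⁻¹ − i·B·D)` equals the explicit matrix
`(1/(1+a²+b²ξ))·[[1−a²−b²ξ, 2a, 2b√ξ],[2a, a²−1−b²ξ, 2ab√ξ],[2b√ξ, 2ab√ξ, b²ξ−1−a²]]`. -/
theorem three_line_filter_scattering_matrix
    (a b ξ : ℝ) (hξ : 0 < ξ) :
    let A : Matrix (Fin 3) (Fin 3) ℂ := -(!![0, 0, 0; -(a : ℂ), 1, 0; -(b : ℂ), 0, 1])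
    let B : Matrix (Fin 3) (Fin 3) ℂ := !![1, (a : ℂ), (b : ℂ); 0, 0, 0; 0, 0, 0]
    let D : Matrix (Fin 3) (Fin 3) ℂ :=
      Matrix.diagonal ![1, 1, ((Real.sqrt ξ : ℝ) : ℂ)]
    IsUnit (A * D⁻¹ + Complex.I • (B * D)) ∧
    -((A * D⁻¹ + Complex.I • (B * D))⁻¹ * (A * D⁻¹ - Complex.I • (B * D))) =
      (((1 + a ^ 2 + b ^ 2 * ξ : ℝ) : ℂ))⁻¹ •
        !![((1 - a ^ 2 - b ^ 2 * ξ : ℝ) : ℂ), ((2 * a : ℝ) : ℂ),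
             ((2 * b * Real.sqrt ξ : ℝ) : ℂ);
           ((2 * a : ℝ) : ℂ), ((a ^ 2 - 1 - b ^ 2 * ξ : ℝ) : ℂ),
             ((2 * a * b * Real.sqrt ξ : ℝ) : ℂ);
           ((2 * b * Real.sqrt ξ : ℝ) : ℂ), ((2 * a * b * Real.sqrt ξ : ℝ) : ℂ),
             ((b ^ 2 * ξ - 1 - a ^ 2 : ℝ) : ℂ)] := by
  intro A B D
  have hs0 : (0:ℝ) < Real.sqrt ξ := Real.sqrt_pos.mpr hξ
  set s : ℝ := Real.sqrt ξ with hs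
  have hsne : s ≠ 0 := ne_of_gt hs0
  have hsC : (s : ℂ) ≠ 0 := by exact_mod_cast hsne
  have hξs : ξ = s ^ 2 := (Real.sq_sqrt hξ.le).symm
  have hcpos : (0:ℝ) < 1 + a ^ 2 + b ^ 2 * ξ := by positivity
  have hxi0 : ((ξ : ℝ) : ℂ) = ((s:ℝ) : ℂ) ^ 2 := by
    exact_mod_cast congrArg Complex.ofReal hξs
  have hcne : ((1 + a ^ 2 + b ^ 2 * ξ : ℝ) : ℂ) ≠ 0 := by
    exact_mod_cast ne_of_gt hcpos
  have hcne' : (1 + (a : ℂ) ^ 2 + (b : ℂ) ^ 2 * (ξ : ℂ)) ≠ 0 := by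
    exact_mod_cast ne_of_gt hcpos
  have hcne'' : (1 + (a : ℂ) ^ 2 + (b : ℂ) ^ 2 * ((Real.sqrt ξ : ℝ) : ℂ) ^ 2) ≠ 0 := by
    rw [← hs]
    have := hxi0
    rw [← this]
    exact hcne'
  have hDinv : D⁻¹ = Matrix.diagonal ![1, 1, ((s : ℝ) : ℂ)⁻¹] := by
    apply Matrix.inv_eq_right_inv
    show D * _ = 1
    simp only [D, Matrix.diagonal_mul_diagonal]
    ext i j
    fin_cases i <;> fin_cases j <;>
      simp [Matrix.diagonal_apply, Matrix.one_apply, hsC, ← hs]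
  have hM : A * D⁻¹ + Complex.I • (B * D) =
      !![Complex.I, Complex.I * a, Complex.I * (b * s);
         (a : ℂ), -1, 0;
         (b : ℂ), 0, -(s : ℂ)⁻¹] := by
    rw [hDinv]
    ext i j
    fin_cases i <;> fin_cases j <;>
      simp [A, B, D, ← hs, Matrix.mul_apply, Fin.sum_univ_three, Matrix.diagonal_apply,
        Matrix.vecMul, dotProduct, Matrix.vecHead, Matrix.vecTail] <;>
      ring_nf
  set M : Matrix (Fin 3) (Fin 3) ℂ :=
    !![Complex.I, Complex.I * a, Complex.I * (b * s);
       (a : ℂ), -1, 0;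
       (b : ℂ), 0, -(s : ℂ)⁻¹] with hMdef
  have hxi : ((ξ : ℝ) : ℂ) = (s : ℂ) ^ 2 := hxi0
  have hdet : M.det = Complex.I * (1 + a ^ 2 + b ^ 2 * ξ) / s := by
    rw [hMdef]
    simp [Matrix.det_fin_three]
    push_cast [hxi]
    field_simp
  have hdetne : M.det ≠ 0 := by
    rw [hdet]
    apply div_ne_zero _ hsC
    exact mul_ne_zero Complex.I_ne_zero hcne'
  have hUnit : IsUnit M := (Matrix.isUnit_iff_isUnit_det M).mpr hdetne.isUnit
  refine ⟨hM ▸ hUnit, ?_⟩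
  set S : Matrix (Fin 3) (Fin 3) ℂ :=
    (((1 + a ^ 2 + b ^ 2 * ξ : ℝ) : ℂ))⁻¹ •
      !![((1 - a ^ 2 - b ^ 2 * ξ : ℝ) : ℂ), ((2 * a : ℝ) : ℂ),
           ((2 * b * s : ℝ) : ℂ);
         ((2 * a : ℝ) : ℂ), ((a ^ 2 - 1 - b ^ 2 * ξ : ℝ) : ℂ),
           ((2 * a * b * s : ℝ) : ℂ);
         ((2 * b * s : ℝ) : ℂ), ((2 * a * b * s : ℝ) : ℂ),
           ((b ^ 2 * ξ - 1 - a ^ 2 : ℝ) : ℂ)] with hSdef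
  have hN : A * D⁻¹ - Complex.I • (B * D) =
      !![-Complex.I, -(Complex.I * a), -(Complex.I * (b * s));
         (a : ℂ), -1, 0;
         (b : ℂ), 0, -(s : ℂ)⁻¹] := by
    rw [hDinv]
    ext i j
    fin_cases i <;> fin_cases j <;>
      simp [A, B, D, ← hs, Matrix.mul_apply, Fin.sum_univ_three, Matrix.diagonal_apply,
        Matrix.vecMul, dotProduct, Matrix.vecHead, Matrix.vecTail] <;>
      ring_nf
  have key : M * S = -(A * D⁻¹ - Complex.I • (B * D)) := by
    rw [hN]
    ext i j
    fin_cases i <;> fin_cases j <;>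
      · simp only [hMdef, hSdef, Matrix.mul_apply, Fin.sum_univ_three,
          Matrix.smul_apply, Matrix.neg_apply, Matrix.cons_val', Matrix.cons_val_zero,
          Matrix.cons_val_one, Matrix.head_cons, Matrix.empty_val',
          Matrix.cons_val_fin_one, Matrix.cons_val_two, Matrix.tail_cons, smul_eq_mul, Matrix.of_apply, Matrix.vecHead]
        push_cast [hxi]
        field_simp [hcne'', show (1 + (a:ℂ)^2 + (b:ℂ)^2 * (s:ℂ)^2) ≠ 0 by rw [← hxi]; exact hcne']
        ring
  rw [hM]
  rw [show A * D⁻¹ - Complex.I • (B * D) = -(M * S) by rw [key, neg_neg]]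
  rw [Matrix.mul_neg, neg_neg, ← Matrix.mul_assoc,
    Matrix.nonsing_inv_mul M hdetne.isUnit, Matrix.one_mul]
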